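/- With K₁₁, K₁₀, K₀₀ the covariance blocks of the exponential kernel exp(-β_n|x-y|) evaluated at odd-index points x₁, x₃, …, x_{2n-1} and even-index points x₀, x₂, …, x_{2n} on the uniform grid x_i = i/(2n), the conditional covariance satisfies K₁₁ - K₁₀·K₀₀⁻¹·K₁₀ᵀ = ((1 - exp(-2β_n))/(1 + exp(-2β_n)))·I, where I is the n×n identity matrix. -/

import Mathlib

open Matrix Finset

private lemma ndist (a b : ℕ) : Nat.dist a b = a - b + (b - a) := rfl

private lemma expabs (βn : ℝ) (x y : ℕ) :
    Real.exp (-βn * |(x : ℝ) - (y : ℝ)|) = Real.exp (-βn) ^ Nat.dist x y := by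
  have habs : |(x : ℝ) - (y : ℝ)| = (Nat.dist x y : ℝ) := by
    rcases le_total x y with h | h
    · rw [Nat.dist_eq_sub_of_le h, Nat.cast_sub h,
        abs_of_nonpos (sub_nonpos.mpr (by exact_mod_cast h))]
      ring
    · rw [Nat.dist_eq_sub_of_le_right h, Nat.cast_sub h,
        abs_of_nonneg (sub_nonneg.mpr (by exact_mod_cast h))]
  rw [habs, mul_comm, Real.exp_nat_mul]

theorem stmt10 (n : ℕ) (hn : 1 ≤ n) (βn : ℝ) (hβ : 0 < βn)
    (K00 : Matrix (Fin (n + 1)) (Fin (n + 1)) ℝ)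
    (K11 : Matrix (Fin n) (Fin n) ℝ)
    (K10 : Matrix (Fin n) (Fin (n + 1)) ℝ)
    (hK00 : K00 = Matrix.of fun (i j : Fin (n + 1)) =>
      Real.exp (-βn * |(2 * (i : ℕ) : ℝ) - (2 * (j : ℕ) : ℝ)|))
    (hK11 : K11 = Matrix.of fun (a b : Fin n) =>
      Real.exp (-βn * |(2 * (a : ℕ) + 1 : ℝ) - (2 * (b : ℕ) + 1 : ℝ)|))
    (hK10 : K10 = Matrix.of fun (a : Fin n) (b : Fin (n + 1)) =>
      Real.exp (-βn * |(2 * (a : ℕ) + 1 : ℝ) - (2 * (b : ℕ) : ℝ)|)) :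
    K11 - K10 * K00⁻¹ * K10ᵀ =
      ((1 - Real.exp (-2 * βn)) / (1 + Real.exp (-2 * βn))) •
        (1 : Matrix (Fin n) (Fin n) ℝ) := by
  obtain ⟨s, hs⟩ : ∃ s, Real.exp (-βn) = s := ⟨_, rfl⟩
  have hs0 : 0 < s := hs ▸ Real.exp_pos _
  have hs1 : s < 1 := hs ▸ Real.exp_lt_one_iff.mpr (by linarith)
  have hden : (1 : ℝ) + s ^ 2 ≠ 0 := by positivity
  have hexp2 : Real.exp (-2 * βn) = s ^ 2 := by
    rw [show (-2 * βn) = -βn + -βn by ring, Real.exp_add, hs]; ring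
  have cast2 : ∀ m : ℕ, ((2 * m : ℕ) : ℝ) = 2 * (m : ℝ) := by intro m; push_cast; ring
  have cast21 : ∀ m : ℕ, ((2 * m + 1 : ℕ) : ℝ) = 2 * (m : ℝ) + 1 := by
    intro m; push_cast; ring
  -- entries as powers of s
  have hK00' : ∀ i j : Fin (n + 1), K00 i j = s ^ (2 * Nat.dist (i : ℕ) (j : ℕ)) := by
    intro i j
    rw [hK00, Matrix.of_apply, ← cast2 (i : ℕ), ← cast2 (j : ℕ), expabs, hs]
    congr 1
    rw [ndist, ndist]; omega
  have hK11' : ∀ a b : Fin n, K11 a b = s ^ (2 * Nat.dist (a : ℕ) (b : ℕ)) := by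
    intro a b
    rw [hK11, Matrix.of_apply, ← cast21 (a : ℕ), ← cast21 (b : ℕ), expabs, hs]
    congr 1
    rw [ndist, ndist]; omega
  have hK10' : ∀ (a : Fin n) (b : Fin (n + 1)),
      K10 a b = s ^ (Nat.dist (2 * (a : ℕ) + 1) (2 * (b : ℕ))) := by
    intro a b
    rw [hK10, Matrix.of_apply, ← cast21 (a : ℕ), ← cast2 (b : ℕ), expabs, hs]
  -- the conditional-expectation matrix M
  set M : Matrix (Fin n) (Fin (n + 1)) ℝ :=
    Matrix.of (fun a k => (if k = Fin.castSucc a then s / (1 + s ^ 2) else 0) +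
      (if k = Fin.succ a then s / (1 + s ^ 2) else 0)) with hMdef
  have hMmul : ∀ (p : ℕ) (X : Matrix (Fin (n + 1)) (Fin p) ℝ) (a : Fin n) (j : Fin p),
      (M * X) a j = s / (1 + s ^ 2) * X (Fin.castSucc a) j
        + s / (1 + s ^ 2) * X (Fin.succ a) j := by
    intro p X a j
    simp only [Matrix.mul_apply, hMdef, Matrix.of_apply, add_mul, ite_mul, zero_mul,
      Finset.sum_add_distrib, Finset.sum_ite_eq', Finset.mem_univ, if_true]
  -- factorization K10 = M * K00
  have hfact : K10 = M * K00 := by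
    ext a j
    rw [hMmul, hK00', hK00', hK10', Fin.coe_castSucc, Fin.val_succ]
    rcases le_or_gt (j : ℕ) (a : ℕ) with h | h
    · have e1 : Nat.dist (2 * (a : ℕ) + 1) (2 * (j : ℕ)) = 2 * ((a : ℕ) - (j : ℕ)) + 1 := by
        rw [ndist]; omega
      have e2 : Nat.dist (a : ℕ) (j : ℕ) = (a : ℕ) - (j : ℕ) := by rw [ndist]; omega
      have e3 : Nat.dist ((a : ℕ) + 1) (j : ℕ) = ((a : ℕ) - (j : ℕ)) + 1 := by
        rw [ndist]; omega
      rw [e1, e2, e3]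
      field_simp
      ring
    · have e1 : Nat.dist (2 * (a : ℕ) + 1) (2 * (j : ℕ))
          = 2 * ((j : ℕ) - (a : ℕ) - 1) + 1 := by rw [ndist]; omega
      have e2 : Nat.dist (a : ℕ) (j : ℕ) = ((j : ℕ) - (a : ℕ) - 1) + 1 := by
        rw [ndist]; omega
      have e3 : Nat.dist ((a : ℕ) + 1) (j : ℕ) = (j : ℕ) - (a : ℕ) - 1 := by
        rw [ndist]; omega
      rw [e1, e2, e3]
      field_simp
      ring
  -- invertibility of K00 via a triangular factor
  set B : Matrix (Fin (n + 1)) (Fin (n + 1)) ℝ :=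
    Matrix.of (fun i k => (if k = i then (1 : ℝ) else 0) +
      (if (k : ℕ) + 1 = (i : ℕ) then -(s ^ 2) else 0)) with hBdef
  have hBmul0 : ∀ j, (B * K00) 0 j = K00 0 j := by
    intro j
    have hcond : ∀ k : Fin (n + 1), ((k : ℕ) + 1 = (((0 : Fin (n + 1))) : ℕ)) = False := by
      intro k; simp
    simp only [Matrix.mul_apply, hBdef, Matrix.of_apply, add_mul, ite_mul, one_mul, zero_mul,
      Finset.sum_add_distrib, hcond, if_false, Finset.sum_const_zero, add_zero,
      Finset.sum_ite_eq', Finset.mem_univ, if_true]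
  have hBmul : ∀ (m : Fin n) (j : Fin (n + 1)),
      (B * K00) (Fin.succ m) j = K00 (Fin.succ m) j - s ^ 2 * K00 (Fin.castSucc m) j := by
    intro m j
    have hcond : ∀ k : Fin (n + 1),
        ((k : ℕ) + 1 = ((Fin.succ m : Fin (n + 1)) : ℕ)) = (k = Fin.castSucc m) := by
      intro k
      simp [Fin.ext_iff]
    simp only [Matrix.mul_apply, hBdef, Matrix.of_apply, add_mul, ite_mul, one_mul, zero_mul,
      neg_mul, Finset.sum_add_distrib, hcond, Finset.sum_ite_eq', Finset.mem_univ, if_true]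
    ring
  have hupper : (B * K00).BlockTriangular id := by
    intro i j hij
    rcases Fin.eq_zero_or_eq_succ i with rfl | ⟨m, rfl⟩
    · exact absurd hij (by simp)
    · have hj : (j : ℕ) ≤ (m : ℕ) := by
        have := hij
        simp only [id_eq, Fin.lt_def, Fin.val_succ] at this
        omega
      rw [hBmul, hK00', hK00', Fin.coe_castSucc, Fin.val_succ]
      have d1 : Nat.dist ((m : ℕ) + 1) (j : ℕ) = ((m : ℕ) - (j : ℕ)) + 1 := by
        rw [ndist]; omega
      have d2 : Nat.dist (m : ℕ) (j : ℕ) = (m : ℕ) - (j : ℕ) := by rw [ndist]; omega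
      rw [d1, d2]
      ring
  have hlowB : B.BlockTriangular OrderDual.toDual := by
    intro i j hij
    rw [OrderDual.toDual_lt_toDual] at hij
    have h1 : ¬(j = i) := by
      intro h; exact absurd (h ▸ hij) (lt_irrefl _)
    have h2 : ¬((j : ℕ) + 1 = (i : ℕ)) := by
      have := Fin.lt_def.mp hij; omega
    simp [hBdef, h1, h2]
  have hdetB : B.det = 1 := by
    rw [Matrix.det_of_lowerTriangular B hlowB]
    apply Finset.prod_eq_one
    intro i _
    simp [hBdef]
  have hs4 : s ^ 4 < 1 := pow_lt_one₀ hs0.le hs1 (by norm_num)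
  have hdiag : ∀ i, (B * K00) i i ≠ 0 := by
    intro i
    rcases Fin.eq_zero_or_eq_succ i with rfl | ⟨m, rfl⟩
    · rw [hBmul0, hK00']
      simp [ndist]
    · rw [hBmul, hK00', hK00', Fin.coe_castSucc, Fin.val_succ]
      have d1 : Nat.dist ((m : ℕ) + 1) ((m : ℕ) + 1) = 0 := by rw [ndist]; omega
      have d2 : Nat.dist (m : ℕ) ((m : ℕ) + 1) = 1 := by rw [ndist]; omega
      rw [d1, d2]
      have : s ^ (2 * 0) - s ^ 2 * s ^ (2 * 1) = 1 - s ^ 4 := by ring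
      rw [this]
      intro h
      nlinarith
  have hdetK : IsUnit K00.det := by
    refine isUnit_iff_ne_zero.mpr ?_
    have h1 : (B * K00).det = K00.det := by rw [Matrix.det_mul, hdetB, one_mul]
    rw [← h1, Matrix.det_of_upperTriangular hupper]
    exact Finset.prod_ne_zero_iff.mpr fun i _ => hdiag i
  have hKinv : K10 * K00⁻¹ = M := by
    rw [hfact]
    exact Matrix.mul_nonsing_inv_cancel_right K00 M hdetK
  -- final computation
  rw [hKinv]
  ext a b
  rw [Matrix.sub_apply, Matrix.smul_apply, Matrix.one_apply, hMmul, Matrix.transpose_apply,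
    Matrix.transpose_apply, hK11', hK10', hK10', Fin.coe_castSucc, Fin.val_succ, hexp2]
  rcases lt_trichotomy (a : ℕ) (b : ℕ) with h | h | h
  · have hne : a ≠ b := by intro hab; rw [hab] at h; exact lt_irrefl _ h
    rw [if_neg hne]
    have e0 : Nat.dist (a : ℕ) (b : ℕ) = ((b : ℕ) - (a : ℕ) - 1) + 1 := by
      rw [ndist]; omega
    have e1 : Nat.dist (2 * (b : ℕ) + 1) (2 * (a : ℕ))
        = 2 * ((b : ℕ) - (a : ℕ) - 1) + 3 := by rw [ndist]; omega
    have e2 : Nat.dist (2 * (b : ℕ) + 1) (2 * ((a : ℕ) + 1))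
        = 2 * ((b : ℕ) - (a : ℕ) - 1) + 1 := by rw [ndist]; omega
    rw [e0, e1, e2]
    field_simp
    ring
  · have heq : a = b := Fin.ext h
    rw [if_pos heq, heq]
    have e0 : Nat.dist (b : ℕ) (b : ℕ) = 0 := by rw [ndist]; omega
    have e1 : Nat.dist (2 * (b : ℕ) + 1) (2 * (b : ℕ)) = 1 := by rw [ndist]; omega
    have e2 : Nat.dist (2 * (b : ℕ) + 1) (2 * ((b : ℕ) + 1)) = 1 := by rw [ndist]; omega
    rw [e0, e1, e2]
    field_simp
    have h1 : (1 + s ^ 2)⁻¹ * (1 + s ^ 2) = 1 := inv_mul_cancel₀ hden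
    linear_combination (s ^ 2 - 1) * h1
  · have hne : a ≠ b := by intro hab; rw [hab] at h; exact lt_irrefl _ h
    rw [if_neg hne]
    have e0 : Nat.dist (a : ℕ) (b : ℕ) = ((a : ℕ) - (b : ℕ) - 1) + 1 := by
      rw [ndist]; omega
    have e1 : Nat.dist (2 * (b : ℕ) + 1) (2 * (a : ℕ))
        = 2 * ((a : ℕ) - (b : ℕ) - 1) + 1 := by rw [ndist]; omega
    have e2 : Nat.dist (2 * (b : ℕ) + 1) (2 * ((a : ℕ) + 1))
        = 2 * ((a : ℕ) - (b : ℕ) - 1) + 3 := by rw [ndist]; omega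
    rw [e0, e1, e2]
    field_simp
    ring
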